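/- The group algebra R𝔖_m acts faithfully on (R^n)^{⊗m} by place permutation if and only if n ≥ m, for any commutative ring R with 1. -/

import Mathlib

namespace PlacePermutation

variable (R : Type*) [CommRing R] (m n : ℕ)

/-- The `m`-fold tensor power of `V = R^n`, modelled on its basis of multi-indices:
`(R^n)^{⊗m} ≅ ((Fin m → Fin n) → R)`, the basis vector `v_i` corresponding to the
indicator function of the multi-index `i`. -/
abbrev TensorSpace := (Fin m → Fin n) → R

/-- Place permutation: `σ` sends the basis vector `v_i = v_{i₁} ⊗ ⋯ ⊗ v_{i_m}` to
`v_{i∘σ}` (as a monoid homomorphism to the endomorphisms of tensor space). -/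
def placePerm : Equiv.Perm (Fin m) →* Module.End R (TensorSpace R m n) where
  toFun σ := LinearMap.funLeft R R (fun j => j ∘ σ)
  map_one' := by ext x j; rfl
  map_mul' σ τ := by ext x j; rfl

/-- The representation of the group algebra `R𝔖_m` on `(R^n)^{⊗m}` by place permutation. -/
noncomputable def placePermRep :
    MonoidAlgebra R (Equiv.Perm (Fin m)) →ₐ[R] Module.End R (TensorSpace R m n) :=
  MonoidAlgebra.lift R (Module.End R (TensorSpace R m n)) (Equiv.Perm (Fin m))
    (placePerm R m n)

lemma rep_apply (x : MonoidAlgebra R (Equiv.Perm (Fin m))) (f : TensorSpace R m n)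
    (j : Fin m → Fin n) :
    placePermRep R m n x f j = ∑ σ : Equiv.Perm (Fin m), x.coeff σ * f (j ∘ σ) := by
  rw [placePermRep, MonoidAlgebra.lift_apply]
  rw [Finsupp.sum_fintype _ _ (by intro; simp)]
  simp [placePerm, LinearMap.funLeft_apply, Finset.sum_apply]

/-- the group algebra `R𝔖_m` acts faithfully on `(R^n)^{⊗m}` by place
permutation if and only if `n ≥ m`. -/
theorem placePermRep_faithful_iff [Nontrivial R] :
    Function.Injective (placePermRep R m n) ↔ m ≤ n := by
  constructor
  · intro hinj
    by_contra hmn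
    push_neg at hmn
    -- antisymmetrizer
    set x : MonoidAlgebra R (Equiv.Perm (Fin m)) :=
      MonoidAlgebra.ofCoeff (Finsupp.equivFunOnFinite.symm (fun σ => ((Equiv.Perm.sign σ : ℤ) : R))) with hx
    have hxσ : ∀ σ, x.coeff σ = ((Equiv.Perm.sign σ : ℤ) : R) := fun σ => rfl
    have hx0 : x ≠ 0 := by
      intro h
      have := congrArg (fun y => Finsupp.equivFunOnFinite y.coeff 1) h
      simp [hx] at this
    have hker : placePermRep R m n x = 0 := by
      apply LinearMap.ext; intro f; funext j
      show placePermRep R m n x f j = 0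
      rw [rep_apply]
      -- j is not injective
      have hjni : ¬ Function.Injective j := by
        intro hj
        exact absurd (Fintype.card_le_of_injective j hj) (by simpa using hmn)
      rw [Function.not_injective_iff] at hjni
      obtain ⟨a, b, hab, hne⟩ := hjni
      have hje : j ∘ (Equiv.swap a b) = j := by
        funext k
        rcases eq_or_ne k a with rfl | hka
        · simp [Equiv.swap_apply_left, hab]
        rcases eq_or_ne k b with rfl | hkb
        · simp [Equiv.swap_apply_right, hab]
        · simp [Equiv.swap_apply_of_ne_of_ne hka hkb]
      refine Finset.sum_involution (fun σ _ => Equiv.swap a b * σ) ?_ ?_ (fun σ _ => Finset.mem_univ _) ?_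
      · intro σ _
        have h1 : (j ∘ ⇑(Equiv.swap a b * σ)) = j ∘ ⇑σ := by
          funext k
          simp only [Equiv.Perm.coe_mul, Function.comp_apply]
          exact congrFun hje (σ k)
        rw [h1, hxσ, hxσ, ← add_mul]
        have : ((Equiv.Perm.sign (Equiv.swap a b * σ) : ℤ) : R) = -((Equiv.Perm.sign σ : ℤ) : R) := by
          rw [map_mul, Equiv.Perm.sign_swap hne]
          push_cast
          ring
        rw [this]
        ring_nf
      · intro σ _ _ h
        have h' : Equiv.swap a b * σ = σ := h
        have hs : Equiv.swap a b = 1 := mul_right_cancel (b := σ) (by rw [one_mul]; exact h')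
        have : b = a := by simpa [hs] using (Equiv.swap_apply_left a b).symm
        exact hne this.symm
      · intro σ _
        simp [← mul_assoc]
    exact hx0 (hinj (by rw [hker, map_zero]))
  · intro hmn
    rw [injective_iff_map_eq_zero]
    intro x hx
    set ι : Fin m → Fin n := Fin.castLE hmn with hι
    have hιinj : Function.Injective ι := Fin.castLE_injective hmn
    have key : ∀ τ : Equiv.Perm (Fin m), x.coeff τ⁻¹ = 0 := by
      intro τ
      have := congrFun (congrFun (congrArg DFunLike.coe hx) (fun i => if i = ι then (1:R) else 0)) (ι ∘ τ)
      rw [rep_apply] at this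
      simp only [LinearMap.zero_apply, Pi.zero_apply] at this
      have hcond : ∀ σ : Equiv.Perm (Fin m), (ι ∘ ⇑τ ∘ ⇑σ = ι) ↔ σ = τ⁻¹ := by
        intro σ
        constructor
        · intro h
          have h2 : ⇑τ ∘ ⇑σ = id := by
            funext k
            exact hιinj (congrFun h k)
          have : τ * σ = 1 := Equiv.ext fun k => congrFun h2 k
          exact eq_inv_of_mul_eq_one_right this
        · rintro rfl
          funext k
          simp
      have : ∑ σ : Equiv.Perm (Fin m), (if σ = τ⁻¹ then x.coeff σ else 0) = 0 := by
        rw [← this]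
        refine Finset.sum_congr rfl fun σ _ => ?_
        rw [mul_ite, mul_one, mul_zero]
        congr 1
        rw [← hcond σ]
        rfl
      rw [Finset.sum_ite_eq' Finset.univ τ⁻¹ x.coeff] at this
      simpa using this
    ext τ
    simpa using key τ⁻¹


end PlacePermutation
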